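/- Let n ≥ 1, let σ be a permutation of Fin n, let t > 1 be a real number, set z = Σ_{i=0}^{n−1} t^{−(i+1)}, and define p : Fin n → ℝ by p(σ(i)) = t^{−(i+1)}/z. Then p is a positive probability vector on Fin n, and for all indices i < j in Fin n one has p(σ(i))/(p(σ(i)) + p(σ(j))) > 1 − 1/t (equivalently, p(σ(j))/(p(σ(i)) + p(σ(j))) < 1/t). -/

import Mathlib

/-- **Geometric construction in the proof of Lemma 1.** For a ranking `σ` of `Fin n`
(`n ≥ 1`) and `t > 1`, let `z = ∑_{i=0}^{n-1} t^{-(i+1)}` and set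
`p (σ i) = t^{-(i+1)} / z`. Then `p` is a positive probability vector, and for all
`i < j` the pairwise opinion `p (σ i) / (p (σ i) + p (σ j))` exceeds `1 - 1/t`
(equivalently, `p (σ j) / (p (σ i) + p (σ j)) < 1/t`). -/
theorem geometric_probabilities_follow_ranking (n : ℕ) (hn : 1 ≤ n)
    (σ : Equiv.Perm (Fin n)) (t : ℝ) (ht : 1 < t)
    (z : ℝ) (hz : z = ∑ i : Fin n, (t ^ ((i : ℕ) + 1))⁻¹)
    (p : Fin n → ℝ) (hp : ∀ i : Fin n, p (σ i) = (t ^ ((i : ℕ) + 1))⁻¹ / z) :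
    ((∀ i, 0 < p i) ∧ (∑ i, p i = 1)) ∧
    ∀ i j : Fin n, i < j →
      p (σ i) / (p (σ i) + p (σ j)) > 1 - 1 / t ∧
      p (σ j) / (p (σ i) + p (σ j)) < 1 / t := by
  have ht0 : 0 < t := lt_trans one_pos ht
  have hpow : ∀ k : ℕ, (0:ℝ) < (t ^ k)⁻¹ := fun k => inv_pos.mpr (pow_pos ht0 k)
  have hz0 : 0 < z := by
    rw [hz]
    apply Finset.sum_pos (fun i _ => hpow _)
    exact Finset.univ_nonempty_iff.mpr ⟨⟨0, hn⟩⟩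
  constructor
  · constructor
    · intro i
      have := hp (σ.symm i)
      rw [Equiv.apply_symm_apply] at this
      rw [this]
      exact div_pos (hpow _) hz0
    · rw [← Equiv.sum_comp σ p]
      have : ∀ i : Fin n, p (σ i) = (t ^ ((i : ℕ) + 1))⁻¹ / z := hp
      rw [Finset.sum_congr rfl (fun i _ => hp i), ← Finset.sum_div, ← hz,
        div_self (ne_of_gt hz0)]
  · intro i j hij
    set a : ℝ := (t ^ ((i : ℕ) + 1))⁻¹ with ha
    set b : ℝ := (t ^ ((j : ℕ) + 1))⁻¹ with hb
    have ha0 : 0 < a := hpow _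
    have hb0 : 0 < b := hpow _
    have hpi : p (σ i) = a / z := hp i
    have hpj : p (σ j) = b / z := hp j
    have hsum : p (σ i) + p (σ j) = (a + b) / z := by rw [hpi, hpj, ← add_div]
    have hab0 : 0 < a + b := by linarith
    have hratio_i : p (σ i) / (p (σ i) + p (σ j)) = a / (a + b) := by
      rw [hsum, hpi]; field_simp
    have hratio_j : p (σ j) / (p (σ i) + p (σ j)) = b / (a + b) := by
      rw [hsum, hpj]; field_simp
    -- key: t * b ≤ a
    have hkey : t * b ≤ a := by
      have hle : (i : ℕ) + 2 ≤ (j : ℕ) + 1 := by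
        have : (i:ℕ) < (j:ℕ) := hij
        omega
      have hpow_le : t ^ ((i : ℕ) + 2) ≤ t ^ ((j : ℕ) + 1) :=
        pow_le_pow_right₀ (le_of_lt ht) hle
      have : b ≤ (t ^ ((i:ℕ) + 2))⁻¹ := by
        rw [hb]
        exact inv_anti₀ (pow_pos ht0 _) hpow_le
      have h2 : t * (t ^ ((i:ℕ) + 2))⁻¹ = a := by
        rw [ha, pow_succ]
        field_simp
      calc t * b ≤ t * (t ^ ((i:ℕ) + 2))⁻¹ := by nlinarith
        _ = a := h2
    have hjlt : b / (a + b) < 1 / t := by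
      rw [div_lt_div_iff₀ hab0 ht0]
      nlinarith
    constructor
    · rw [hratio_i]
      have : a / (a + b) = 1 - b / (a + b) := by field_simp; ring
      rw [this]
      linarith
    · rw [hratio_j]; exact hjlt
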